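/- Let μ be the measure on ℝ² with density (e^{-x}/(2λ)) φ(λ + (y-x)/(2λ)) dx dy, λ > 0, and A₂ = {(x,y) : x > 0 or y > 0}. Then for t > 0, μ({(x,y) ∈ A₂ : y - x ≤ t}) = 2Φ(λ) - Φ(λ - t/(2λ)). -/

import Mathlib

open Real MeasureTheory
open scoped ENNReal

noncomputable def stdPhi (t : ℝ) : ℝ := (Real.sqrt (2 * Real.pi))⁻¹ * Real.exp (-t ^ 2 / 2)

noncomputable def stdPhiCDF (x : ℝ) : ℝ := ∫ t in Set.Iic x, stdPhi t

/-- Exponent measure of the bivariate Hüsler-Reiss distribution, with density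
`e^{-x}/(2λ) φ(λ + (y-x)/(2λ))` with respect to Lebesgue measure on ℝ². -/
noncomputable def HRexpMeasure (l : ℝ) : Measure (ℝ × ℝ) :=
  (volume : Measure (ℝ × ℝ)).withDensity
    (fun p => ENNReal.ofReal (Real.exp (-p.1) / (2 * l) * stdPhi (l + (p.2 - p.1) / (2 * l))))

section Helpers

open Set

lemma stdPhi_cont : Continuous stdPhi := by unfold stdPhi; fun_prop

lemma stdPhi_nonneg (t : ℝ) : 0 ≤ stdPhi t := by unfold stdPhi; positivity

lemma stdPhi_integrable : Integrable stdPhi := by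
  have h : Integrable (fun x : ℝ => Real.exp (-(1/2) * x ^ 2)) :=
    integrable_exp_neg_mul_sq (by norm_num)
  have he : stdPhi = fun t => (Real.sqrt (2 * Real.pi))⁻¹ * Real.exp (-(1/2) * t ^ 2) := by
    funext t; unfold stdPhi; ring_nf
  rw [he]; exact h.const_mul _

lemma int1 (l : ℝ) (hl : 0 < l) :
    ∫ z in Iic (0:ℝ), stdPhi (l + z / (2 * l)) = (2 * l) * stdPhiCDF l := by
  have hc : (0:ℝ) < 2 * l := by linarith
  rw [← integral_indicator measurableSet_Iic]
  have key : ∀ z : ℝ, (Iic (0:ℝ)).indicator (fun z => stdPhi (l + z / (2 * l))) z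
      = (fun w => (Iic l).indicator stdPhi (w + l)) ((2*l)⁻¹ * z) := by
    intro z
    have hiff : z ≤ 0 ↔ (2*l)⁻¹ * z + l ≤ l := by
      constructor
      · intro h; nlinarith [mul_nonpos_of_nonneg_of_nonpos (inv_nonneg.2 hc.le) h]
      · intro h; nlinarith [inv_pos.2 hc]
    simp only [Set.indicator_apply, mem_Iic]
    by_cases h : z ≤ 0
    · rw [if_pos h, if_pos (hiff.1 h)]
      congr 1
      field_simp
      ring
    · rw [if_neg h, if_neg (fun hh => h (hiff.2 hh))]
  simp_rw [key]
  rw [Measure.integral_comp_mul_left (fun w => (Iic l).indicator stdPhi (w + l)) ((2*l)⁻¹)]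
  rw [integral_add_right_eq_self ((Iic l).indicator stdPhi) l]
  rw [integral_indicator measurableSet_Iic]
  rw [abs_of_pos (by positivity), inv_inv, smul_eq_mul]
  rfl

lemma intIoc (a b : ℝ) (hab : a ≤ b) :
    ∫ z in Ioc a b, stdPhi z = stdPhiCDF b - stdPhiCDF a := by
  have := intervalIntegral.integral_Iic_sub_Iic (μ := volume) (f := stdPhi)
    (stdPhi_integrable.integrableOn) (stdPhi_integrable.integrableOn) (a := a) (b := b)
  rw [intervalIntegral.integral_of_le hab] at this
  rw [← this]; rfl

lemma int2 (l : ℝ) (hl : 0 < l) (t : ℝ) (ht : 0 < t) :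
    ∫ z in Ioc (0:ℝ) t, stdPhi (l - z / (2 * l))
      = (2 * l) * (stdPhiCDF l - stdPhiCDF (l - t / (2 * l))) := by
  have hc : (0:ℝ) < 2 * l := by linarith
  set a := l - t / (2 * l) with ha
  rw [← integral_indicator measurableSet_Ioc]
  have key : ∀ z : ℝ, (Ioc (0:ℝ) t).indicator (fun z => stdPhi (l - z / (2 * l))) z
      = (fun w => (Ico a l).indicator stdPhi (w + l)) (-(2*l)⁻¹ * z) := by
    intro z
    have h1 : (0 < z ∧ z ≤ t) ↔ (a ≤ -(2*l)⁻¹ * z + l ∧ -(2*l)⁻¹ * z + l < l) := by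
      rw [ha]
      constructor
      · rintro ⟨hz0, hzt⟩
        constructor
        · have h5 : z / (2*l) ≤ t / (2*l) := by gcongr
          have hzz : -(2*l)⁻¹ * z = -(z / (2*l)) := by field_simp
          rw [hzz]; linarith
        · nlinarith [inv_pos.2 hc]
      · rintro ⟨h2, h3⟩
        constructor
        · nlinarith [inv_pos.2 hc]
        · have hzz : -(2*l)⁻¹ * z = -(z / (2*l)) := by field_simp
          rw [hzz] at h2
          have h6 : z / (2*l) ≤ t / (2*l) := by linarith
          have := (div_le_div_iff_of_pos_right hc).1 h6
          linarith
    simp only [Set.indicator_apply, mem_Ioc, mem_Ico]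
    by_cases h : 0 < z ∧ z ≤ t
    · rw [if_pos h, if_pos (h1.1 h)]
      congr 1
      field_simp
      ring
    · rw [if_neg h, if_neg (fun hh => h (h1.2 hh))]
  simp_rw [key]
  rw [Measure.integral_comp_mul_left (fun w => (Ico a l).indicator stdPhi (w + l)) (-(2*l)⁻¹)]
  rw [integral_add_right_eq_self ((Ico a l).indicator stdPhi) l]
  rw [integral_indicator measurableSet_Ico, integral_Ico_eq_integral_Ioo,
    ← integral_Ioc_eq_integral_Ioo]
  have hal : a ≤ l := by
    rw [ha]; nlinarith [div_pos ht hc]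
  rw [intIoc a l hal, smul_eq_mul]
  congr 1
  rw [inv_neg, inv_inv, abs_neg, abs_of_pos hc]

lemma comp1 (l : ℝ) (hl : 0 < l) : Integrable (fun z => stdPhi (l + z / (2*l))) := by
  have h2 := (stdPhi_integrable.comp_add_right l).comp_mul_left' (R := (2*l)⁻¹) (by positivity)
  have he : (fun z => stdPhi (l + z / (2*l))) = fun z => stdPhi ((2*l)⁻¹ * z + l) := by
    funext z; congr 1; field_simp; ring
  rw [he]; exact h2

lemma comp2 (l : ℝ) (hl : 0 < l) : Integrable (fun z => stdPhi (l - z / (2*l))) := by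
  have h2 := (stdPhi_integrable.comp_add_right l).comp_mul_left' (R := -(2*l)⁻¹)
    (by simp; positivity)
  have he : (fun z => stdPhi (l - z / (2*l))) = fun z => stdPhi (-(2*l)⁻¹ * z + l) := by
    funext z; congr 1; field_simp; ring
  rw [he]; exact h2

lemma key_exp (l z : ℝ) (hl : 0 < l) :
    Real.exp z * stdPhi (l + z / (2 * l)) = stdPhi (l - z / (2 * l)) := by
  unfold stdPhi
  rw [mul_left_comm, ← Real.exp_add]
  congr 2
  field_simp
  ring

lemma lint_exp (a : ℝ) :
    ∫⁻ x in Ioi a, ENNReal.ofReal (Real.exp (-x)) = ENNReal.ofReal (Real.exp (-a)) := by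
  rw [← ofReal_integral_eq_lintegral_ofReal
    (by have h := exp_neg_integrableOn_Ioi a one_pos; simp at h; exact h)
    (ae_of_all _ fun x => (Real.exp_pos _).le)]
  rw [integral_exp_neg_Ioi]

end Helpers

open Set

/-- Exponent measure of increments at most `t > 0` within the region where at least
one coordinate is positive. -/
theorem HRexpMeasure_increment_pos (l : ℝ) (hl : 0 < l) (t : ℝ) (ht : 0 < t) :
    HRexpMeasure l {p : ℝ × ℝ | (0 < p.1 ∨ 0 < p.2) ∧ p.2 - p.1 ≤ t} =
      ENNReal.ofReal (2 * stdPhiCDF l - stdPhiCDF (l - t / (2 * l))) := by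
  have hc : (0:ℝ) < 2 * l := by linarith
  have hcne : (2 * l) ≠ 0 := ne_of_gt hc
  have hS : MeasurableSet {p : ℝ × ℝ | (0 < p.1 ∨ 0 < p.2) ∧ p.2 - p.1 ≤ t} :=
    (((measurableSet_lt measurable_const measurable_fst).union
      (measurableSet_lt measurable_const measurable_snd)).inter
      (measurableSet_le (measurable_snd.sub measurable_fst) measurable_const))
  have hT : MeasurableSet {q : ℝ × ℝ | (0 < q.1 ∨ 0 < q.2 + q.1) ∧ q.2 ≤ t} :=
    (((measurableSet_lt measurable_const measurable_fst).union
      (measurableSet_lt measurable_const (measurable_snd.add measurable_fst))).inter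
      (measurableSet_le measurable_snd measurable_const))
  have hcont : Continuous fun p : ℝ × ℝ =>
      Real.exp (-p.1) / (2 * l) * stdPhi (l + (p.2 - p.1) / (2 * l)) := by
    apply Continuous.mul
    · fun_prop
    · exact stdPhi_cont.comp (by fun_prop)
  have hcont2 : Continuous fun q : ℝ × ℝ =>
      Real.exp (-q.1) / (2 * l) * stdPhi (l + q.2 / (2 * l)) := by
    apply Continuous.mul
    · fun_prop
    · exact stdPhi_cont.comp (by fun_prop)
  set W : ℝ × ℝ → ℝ≥0∞ := fun q =>
    ({q : ℝ × ℝ | (0 < q.1 ∨ 0 < q.2 + q.1) ∧ q.2 ≤ t}).indicator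
      (fun q => ENNReal.ofReal (Real.exp (-q.1) / (2 * l) * stdPhi (l + q.2 / (2 * l)))) q
    with hWdef
  have hWmeas : Measurable W := (hcont2.measurable.ennreal_ofReal).indicator hT
  -- step 3 : shear for each fixed x
  have step3 : ∀ x : ℝ,
      (∫⁻ y, ({p : ℝ × ℝ | (0 < p.1 ∨ 0 < p.2) ∧ p.2 - p.1 ≤ t}.indicator
        (fun p => ENNReal.ofReal
          (Real.exp (-p.1) / (2 * l) * stdPhi (l + (p.2 - p.1) / (2 * l))))) (x, y))
      = ∫⁻ z, W (x, z) := by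
    intro x
    have hmeas : Measurable fun y : ℝ =>
        ({p : ℝ × ℝ | (0 < p.1 ∨ 0 < p.2) ∧ p.2 - p.1 ≤ t}.indicator
          (fun p => ENNReal.ofReal
            (Real.exp (-p.1) / (2 * l) * stdPhi (l + (p.2 - p.1) / (2 * l))))) (x, y) :=
      (hcont.measurable.ennreal_ofReal.indicator hS).comp measurable_prodMk_left
    rw [← (measurePreserving_add_right (volume : Measure ℝ) x).lintegral_comp hmeas]
    refine lintegral_congr fun z => ?_
    simp only [hWdef, Set.indicator_apply, Set.mem_setOf_eq, add_sub_cancel_right]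
  rw [show HRexpMeasure l = (volume : Measure (ℝ × ℝ)).withDensity
    (fun p => ENNReal.ofReal
      (Real.exp (-p.1) / (2 * l) * stdPhi (l + (p.2 - p.1) / (2 * l)))) from rfl]
  rw [withDensity_apply _ hS, ← lintegral_indicator hS, Measure.volume_eq_prod,
    lintegral_prod _ ((hcont.measurable.ennreal_ofReal.indicator hS).aemeasurable)]
  rw [lintegral_congr step3]
  rw [lintegral_lintegral_swap hWmeas.aemeasurable]
  -- step 5 : inner integral in x
  have step5 : ∀ z : ℝ, (∫⁻ x, W (x, z)) = (Iic t).indicator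
      (fun z => ENNReal.ofReal (Real.exp (max 0 z) * (stdPhi (l + z / (2 * l)) / (2 * l)))) z := by
    intro z
    by_cases hz : z ≤ t
    · have hfx : (fun x : ℝ => W (x, z)) = (Ioi (-(max 0 z))).indicator
          (fun x => ENNReal.ofReal (Real.exp (-x) * (stdPhi (l + z / (2 * l)) / (2 * l)))) := by
        funext x
        have hmem : ((0 : ℝ) < x ∨ 0 < z + x) ↔ -(max 0 z) < x := by
          rcases le_total z 0 with h | h
          · rw [max_eq_left h, neg_zero]
            constructor
            · rintro (h1 | h1)
              · exact h1
              · linarith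
            · exact fun h1 => Or.inl h1
          · rw [max_eq_right h]
            constructor
            · rintro (h1 | h1) <;> linarith
            · intro h1; right; linarith
        simp only [hWdef, Set.indicator_apply, Set.mem_setOf_eq, Set.mem_Ioi, and_iff_left hz,
          hmem]
        split_ifs with h
        · congr 1; ring
        · rfl
      rw [hfx, lintegral_indicator measurableSet_Ioi]
      have : ∀ x : ℝ, ENNReal.ofReal (Real.exp (-x) * (stdPhi (l + z / (2 * l)) / (2 * l)))
          = ENNReal.ofReal (Real.exp (-x)) * ENNReal.ofReal (stdPhi (l + z / (2 * l)) / (2 * l)) :=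
        fun x => ENNReal.ofReal_mul (Real.exp_pos _).le
      simp_rw [this]
      rw [lintegral_mul_const _ (by fun_prop), lint_exp, neg_neg,
        Set.indicator_of_mem (mem_Iic.2 hz),
        ← ENNReal.ofReal_mul (Real.exp_pos _).le]
    · have h0 : ∀ x : ℝ, W (x, z) = 0 := by
        intro x
        apply Set.indicator_of_notMem
        simp only [Set.mem_setOf_eq]
        exact fun hh => hz hh.2
      simp only [h0, lintegral_zero]
      rw [Set.indicator_of_notMem (by simpa using hz)]
  rw [lintegral_congr step5, lintegral_indicator measurableSet_Iic]
  rw [← Iic_union_Ioc_eq_Iic ht.le,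
    lintegral_union measurableSet_Ioc (Iic_disjoint_Ioc le_rfl)]
  have e1 : ∀ z ∈ Iic (0:ℝ),
      ENNReal.ofReal (Real.exp (max 0 z) * (stdPhi (l + z / (2 * l)) / (2 * l)))
      = ENNReal.ofReal (stdPhi (l + z / (2 * l)) / (2 * l)) := by
    intro z hz
    rw [max_eq_left (mem_Iic.1 hz), Real.exp_zero, one_mul]
  have e2 : ∀ z ∈ Ioc (0:ℝ) t,
      ENNReal.ofReal (Real.exp (max 0 z) * (stdPhi (l + z / (2 * l)) / (2 * l)))
      = ENNReal.ofReal (stdPhi (l - z / (2 * l)) / (2 * l)) := by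
    intro z hz
    rw [max_eq_right hz.1.le]
    congr 1
    rw [← key_exp l z hl]
    ring
  rw [setLIntegral_congr_fun measurableSet_Iic e1,
    setLIntegral_congr_fun measurableSet_Ioc e2]
  rw [← ofReal_integral_eq_lintegral_ofReal (((comp1 l hl).div_const (2 * l)).integrableOn)
    (ae_of_all _ fun z => div_nonneg (stdPhi_nonneg _) hc.le)]
  rw [← ofReal_integral_eq_lintegral_ofReal (((comp2 l hl).div_const (2 * l)).integrableOn)
    (ae_of_all _ fun z => div_nonneg (stdPhi_nonneg _) hc.le)]
  rw [integral_div, int1 l hl, mul_div_cancel_left₀ _ hcne]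
  rw [integral_div, int2 l hl t ht, mul_div_cancel_left₀ _ hcne]
  have hal : l - t / (2 * l) ≤ l := by nlinarith [div_pos ht hc]
  have h1 : 0 ≤ stdPhiCDF l :=
    setIntegral_nonneg measurableSet_Iic fun z _ => stdPhi_nonneg z
  have h2 : 0 ≤ stdPhiCDF l - stdPhiCDF (l - t / (2 * l)) := by
    rw [← intIoc _ _ hal]
    exact setIntegral_nonneg measurableSet_Ioc fun z _ => stdPhi_nonneg z
  rw [← ENNReal.ofReal_add h1 h2]
  congr 1
  ring
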